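/- Let m ≥ 1, a₀ > 0, a ∈ ℝ^m, f(x) = a₀ + ⟨a,x⟩, and T(x) = x/f(x). Let Δ ⊆ ℝ^m be a Lebesgue-measurable set on which f is strictly positive. Then for every measurable function g : ℝ^m → [0,∞], ∫_{T(Δ)} g(y) dλ(y) = ∫_{Δ} g(T(x)) · (a₀/f(x)^{m+1}) dλ(x), where λ is Lebesgue measure on ℝ^m. (This expresses the pull-back relation T*(dx) = f(0)·f̃^{-(m+1)} dx̃ for the twist map.) -/

import Mathlib

open MeasureTheory

/-- Change of variables for the f-twist map T(x) = x/f(x): for a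
measurable set Δ on which f(x) = a₀ + ⟨a,x⟩ (a₀ > 0) is strictly positive, and
any measurable g : ℝ^m → [0,∞],
∫_{T(Δ)} g dλ = ∫_Δ g(T x)·(a₀/f(x)^{m+1}) dλ(x). -/
theorem stmt5 (m : ℕ) (hm : 1 ≤ m) (a₀ : ℝ) (ha₀ : 0 < a₀) (a : Fin m → ℝ)
    (f : (Fin m → ℝ) → ℝ) (hf : ∀ x, f x = a₀ + ∑ i, a i * x i)
    (T : (Fin m → ℝ) → (Fin m → ℝ)) (hT : ∀ x, T x = (f x)⁻¹ • x)
    (Δ : Set (Fin m → ℝ)) (hΔ : MeasurableSet Δ)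
    (hfΔ : ∀ x ∈ Δ, 0 < f x)
    (g : (Fin m → ℝ) → ENNReal) (hg : Measurable g) :
    ∫⁻ y in T '' Δ, g y ∂volume =
      ∫⁻ x in Δ, g (T x) * ENNReal.ofReal (a₀ / (f x) ^ (m + 1)) ∂volume := by
  classical
  set L : (Fin m → ℝ) →L[ℝ] ℝ := ∑ i : Fin m, a i • ContinuousLinearMap.proj i with hL
  have hLapp : ∀ v, L v = ∑ i, a i * v i := by
    intro v
    simp [hL, ContinuousLinearMap.sum_apply]
  have hfL : ∀ x, f x = a₀ + L x := by intro x; rw [hf, hLapp]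
  set T' : (Fin m → ℝ) → (Fin m → ℝ) →L[ℝ] (Fin m → ℝ) := fun x =>
    (f x)⁻¹ • ContinuousLinearMap.id ℝ (Fin m → ℝ) + ((-(f x ^ 2)⁻¹) • L).smulRight x with hT'
  have hderiv : ∀ x ∈ Δ, HasFDerivWithinAt T (T' x) Δ x := by
    intro x hx
    have hfd : HasFDerivAt f L x := by
      have : HasFDerivAt (fun y => a₀ + L y) L x := (L.hasFDerivAt).const_add a₀
      exact this.congr_of_eventuallyEq (by filter_upwards with y using (hfL y))
    have hne : f x ≠ 0 := (hfΔ x hx).ne'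
    have hinv0 : HasFDerivAt (fun y => (f y)⁻¹)
        (((1 : ℝ →L[ℝ] ℝ).smulRight (-(f x ^ 2)⁻¹)).comp L) x :=
      (hasFDerivAt_inv hne).comp x hfd
    have hDeq : ((1 : ℝ →L[ℝ] ℝ).smulRight (-(f x ^ 2)⁻¹)).comp L = (-(f x ^ 2)⁻¹) • L := by
      ext v
      simp [mul_comm]
    rw [hDeq] at hinv0
    have hid : HasFDerivAt (fun y : Fin m → ℝ => y) (ContinuousLinearMap.id ℝ _) x :=
      hasFDerivAt_id x
    have h2 : HasFDerivAt T (T' x) x := by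
      refine ((hinv0.smul hid).congr_of_eventuallyEq ?_)
      filter_upwards with y using (hT y)
    exact h2.hasFDerivWithinAt
  have hinj : Set.InjOn T Δ := by
    intro x hx y hy hxy
    have hfx := hfΔ x hx
    have hfy := hfΔ y hy
    rw [hT, hT] at hxy
    have hLxy : L ((f x)⁻¹ • x) = L ((f y)⁻¹ • y) := by rw [hxy]
    rw [L.map_smul, L.map_smul, smul_eq_mul, smul_eq_mul] at hLxy
    have hLx : L x = f x - a₀ := by rw [hfL x]; ring
    have hLy : L y = f y - a₀ := by rw [hfL y]; ring
    rw [hLx, hLy] at hLxy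
    have hfxy : f x = f y := by
      have h1 : (f x)⁻¹ * (f x - a₀) = 1 - a₀ / f x := by field_simp
      have h2 : (f y)⁻¹ * (f y - a₀) = 1 - a₀ / f y := by field_simp
      rw [h1, h2] at hLxy
      have h3 : a₀ / f x = a₀ / f y := by linarith
      field_simp at h3
      linarith
    have : (f x)⁻¹ • x = (f x)⁻¹ • y := by rw [hxy, hfxy]
    exact smul_right_injective _ (inv_ne_zero hfx.ne') this
  have hdet : ∀ x ∈ Δ, |(T' x).det| = a₀ / (f x) ^ (m + 1) := by
    intro x hx
    have hfx := hfΔ x hx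
    set c := (f x)⁻¹ with hc
    have hcpos : 0 < c := inv_pos.mpr hfx
    have hM : LinearMap.toMatrix' ((T' x) : (Fin m → ℝ) →ₗ[ℝ] (Fin m → ℝ)) =
        c • (1 + Matrix.replicateCol Unit (fun i => -c * x i) * Matrix.replicateRow Unit a) := by
      ext i j
      rw [LinearMap.toMatrix'_apply]
      simp only [hT', ContinuousLinearMap.coe_coe, ContinuousLinearMap.add_apply,
        ContinuousLinearMap.smul_apply, ContinuousLinearMap.id_apply,
        ContinuousLinearMap.smulRight_apply, Pi.add_apply, Pi.smul_apply,
        Matrix.smul_apply, Matrix.add_apply, Matrix.mul_apply, Matrix.replicateCol_apply,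
        Matrix.replicateRow_apply, Matrix.one_apply, smul_eq_mul]
      rw [hLapp]
      by_cases h : i = j
      · subst h
        simp [Finset.sum_ite_eq', Pi.single_apply, hc, pow_two, mul_inv]
        ring
      · simp [h, Ne.symm h, Finset.sum_ite_eq', Pi.single_apply, hc, pow_two, mul_inv]
        ring
    have hdet1 : (T' x).det = c ^ m * (1 + ∑ i, a i * (-c * x i)) := by
      rw [ContinuousLinearMap.det, ← LinearMap.det_toMatrix', hM, Matrix.det_smul,
        Matrix.det_one_add_replicateCol_mul_replicateRow]
      simp [dotProduct]
    have hdot : (∑ i, a i * (-c * x i)) = -c * (f x - a₀) := by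
      have hLx : L x = f x - a₀ := by rw [hfL x]; ring
      have h4 : (∑ i, a i * (-c * x i)) = -c * ∑ i, a i * x i := by
        rw [Finset.mul_sum]
        exact Finset.sum_congr rfl fun i _ => by ring
      rw [h4, ← hLapp, hLx]
    have hcf : c * f x = 1 := inv_mul_cancel₀ hfx.ne'
    have hdet2 : (T' x).det = a₀ * c ^ (m + 1) := by
      rw [hdet1, hdot]
      have h5 : 1 + -c * (f x - a₀) = a₀ * c := by linear_combination -hcf
      rw [h5]; ring
    rw [hdet2, abs_of_pos (by positivity)]
    rw [hc, div_eq_mul_inv, inv_pow]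
  rw [lintegral_image_eq_lintegral_abs_det_fderiv_mul volume hΔ hderiv hinj g]
  refine setLIntegral_congr_fun hΔ ?_
  intro x hx; dsimp only
  rw [hdet x hx, mul_comm]
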